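/- arXiv:2106.03659 — 4 statements merged into one kernel-verified Lean document; each statement's English description precedes it below -/
import Mathlib

section
/- For all k ≥ 1 and n ≥ 1, a_k(n) = a_{k-1}(n+2) - C(n+k, k-1), equivalently, the partial sum ∑_{m=1}^n a_{k-1}(m) = a_{k-1}(n+2) - C(n+k, k-1). -/
def fib (n : ℕ) : ℕ := Nat.fib n

def a : ℕ → ℕ → ℕ
  | 0, n => fib n
  | k + 1, n => ∑ m ∈ Finset.Icc 1 n, a k m

def s (k n : ℕ) : ℕ :=
  ((Finset.Icc 1 n).powerset.filter (fun S => k ≤ S.card ∧ ∀ x ∈ S, S.card ≤ x)).card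

lemma a_two (k : ℕ) : a k 2 = k + 1 := by
  induction k with
  | zero => simp [a, fib]
  | succ k ih =>
    have h1 : a k 1 = 1 := by
      clear ih
      induction k with
      | zero => simp [a, fib]
      | succ k ih => simpa [a] using ih
    show (∑ m ∈ Finset.Icc 1 2, a k m) = k + 1 + 1
    rw [Finset.sum_Icc_succ_top (by omega), Finset.Icc_self, Finset.sum_singleton, h1, ih]
    omega

lemma key (k : ℕ) : ∀ n, (∑ m ∈ Finset.Icc 1 n, a k m) + Nat.choose (n + k + 1) k = a k (n + 2) := by
  induction k with
  | zero =>
    intro n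
    induction n with
    | zero => simp [a, fib]
    | succ n ih =>
      rw [Finset.sum_Icc_succ_top (by omega)]
      simp only [a, fib, Nat.choose_zero_right] at *
      have h2 : Nat.fib (n + 1 + 2) = Nat.fib (n + 2) + Nat.fib (n + 1) := by
        rw [show n + 1 + 2 = (n + 1) + 2 from rfl, Nat.fib_add_two]; ring
      omega
  | succ k ihk =>
    intro n
    induction n with
    | zero =>
      have : Nat.choose (k + 2) (k + 1) = a (k + 1) 2 := by
        rw [a_two, Nat.choose_succ_self_right]
      simpa using this
    | succ n ihn =>
      have h1 := ihk (n + 1)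
      have e1 : a (k + 1) (n + 1 + 2) = a (k + 1) (n + 2) + a k (n + 3) := by
        show (∑ m ∈ Finset.Icc 1 (n + 3), a k m) = (∑ m ∈ Finset.Icc 1 (n + 2), a k m) + a k (n + 3)
        rw [show n + 3 = (n + 2) + 1 from rfl, Finset.sum_Icc_succ_top (by omega)]
      have e2 : a (k + 1) (n + 1) = ∑ m ∈ Finset.Icc 1 (n + 1), a k m := rfl
      have e3 : Nat.choose (n + 1 + (k + 1) + 1) (k + 1)
          = Nat.choose (n + k + 2) k + Nat.choose (n + k + 2) (k + 1) := by
        rw [show n + 1 + (k + 1) + 1 = (n + k + 2) + 1 from by ring]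
        exact Nat.choose_succ_succ _ _
      rw [Finset.sum_Icc_succ_top (by omega), e1, e3, e2]
      have h1' : (∑ m ∈ Finset.Icc 1 (n + 1), a k m) + Nat.choose (n + k + 2) k = a k (n + 3) := by
        rw [show n + k + 2 = n + 1 + k + 1 from by ring, show n + 3 = n + 1 + 2 from by ring]
        exact h1
      have ihn' : (∑ m ∈ Finset.Icc 1 n, a (k + 1) m) + Nat.choose (n + k + 2) (k + 1)
          = a (k + 1) (n + 2) := by
        rw [show n + k + 2 = n + (k + 1) + 1 from by ring]
        exact ihn
      omega

theorem partial_sum_identity (k n : ℕ) (hk : 1 ≤ k) (hn : 1 ≤ n) :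
    a k n + Nat.choose (n + k) (k - 1) = a (k - 1) (n + 2) ∧
    (∑ m ∈ Finset.Icc 1 n, a (k - 1) m) + Nat.choose (n + k) (k - 1) = a (k - 1) (n + 2) := by
  obtain ⟨j, rfl⟩ : ∃ j, k = j + 1 := ⟨k - 1, by omega⟩
  simp only [Nat.add_sub_cancel]
  have h := key j n
  rw [show n + (j + 1) = n + j + 1 from by ring]
  exact ⟨h, h⟩
end

section
/- For all k ≥ 0, a_k(3) = C(k+2, k) + 1. -/
lemma icc13 : Finset.Icc 1 3 = ({1, 2, 3} : Finset ℕ) := by decide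

lemma a_one (k : ℕ) : a k 1 = 1 := by
  induction k with
  | zero => rfl
  | succ k ih =>
    show ∑ m ∈ Finset.Icc 1 1, a k m = 1
    simpa using ih

theorem a_three (k : ℕ) : a k 3 = Nat.choose (k + 2) k + 1 := by
  induction k with
  | zero => rfl
  | succ k ih =>
    show ∑ m ∈ Finset.Icc 1 3, a k m = Nat.choose (k + 3) (k + 1) + 1
    rw [icc13, Finset.sum_insert (by decide), Finset.sum_insert (by decide),
      Finset.sum_singleton, a_one, a_two, ih]
    have pascal : (k + 3).choose (k + 1) = (k + 2).choose k + (k + 2).choose (k + 1) :=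
      Nat.choose_succ_succ (k + 2) k
    have h2 : (k + 2).choose (k + 1) = k + 2 := Nat.choose_succ_self_right (k + 1)
    omega
end

section
/- Fix ℓ ≥ 0 and n ≥ 1. Then s_{ℓ+1}(n) = s_ℓ(n) - C(n - ℓ + 1, ℓ). -/
theorem s_succ (l n : ℕ) (hn : 1 ≤ n) :
    s (l + 1) n + Nat.choose (n - l + 1) l = s l n := by
  classical
  have hsplit : (Finset.Icc 1 n).powerset.filter (fun S => l ≤ S.card ∧ ∀ x ∈ S, S.card ≤ x)
      = (Finset.Icc 1 n).powerset.filter (fun S => l + 1 ≤ S.card ∧ ∀ x ∈ S, S.card ≤ x)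
        ∪ (Finset.Icc 1 n).powerset.filter (fun S => S.card = l ∧ ∀ x ∈ S, l ≤ x) := by
    ext S
    simp only [Finset.mem_union, Finset.mem_filter, Finset.mem_powerset]
    constructor
    · rintro ⟨hS, hcard, hmin⟩
      rcases eq_or_lt_of_le hcard with h | h
      · exact Or.inr ⟨hS, h.symm, fun x hx => h ▸ hmin x hx⟩
      · exact Or.inl ⟨hS, h, hmin⟩
    · rintro (⟨hS, hcard, hmin⟩ | ⟨hS, hcard, hmin⟩)
      · exact ⟨hS, le_of_lt hcard, hmin⟩
      · exact ⟨hS, hcard.ge, fun x hx => hcard ▸ hmin x hx⟩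
  have hdisj : Disjoint
      ((Finset.Icc 1 n).powerset.filter (fun S => l + 1 ≤ S.card ∧ ∀ x ∈ S, S.card ≤ x))
      ((Finset.Icc 1 n).powerset.filter (fun S => S.card = l ∧ ∀ x ∈ S, l ≤ x)) := by
    rw [Finset.disjoint_left]
    rintro S hS1 hS2
    simp only [Finset.mem_filter] at hS1 hS2
    omega
  have hQ : (Finset.Icc 1 n).powerset.filter (fun S => S.card = l ∧ ∀ x ∈ S, l ≤ x)
      = Finset.powersetCard l (Finset.Icc (max 1 l) n) := by
    ext S
    simp only [Finset.mem_filter, Finset.mem_powerset, Finset.mem_powersetCard]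
    constructor
    · rintro ⟨hS, hcard, hmin⟩
      refine ⟨fun x hx => ?_, hcard⟩
      have h1 := hS hx
      have h2 := hmin x hx
      simp only [Finset.mem_Icc] at h1 ⊢
      exact ⟨max_le h1.1 h2, h1.2⟩
    · rintro ⟨hS, hcard⟩
      refine ⟨fun x hx => ?_, hcard, fun x hx => ?_⟩
      · have := hS hx
        simp only [Finset.mem_Icc] at this ⊢
        exact ⟨le_trans (le_max_left 1 l) this.1, this.2⟩
      · have := hS hx
        simp only [Finset.mem_Icc] at this
        exact le_trans (le_max_right 1 l) this.1
  have hcount : (Finset.powersetCard l (Finset.Icc (max 1 l) n)).card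
      = Nat.choose (n - l + 1) l := by
    rw [Finset.card_powersetCard, Nat.card_Icc]
    rcases Nat.eq_zero_or_pos l with h0 | h1
    · subst h0; simp
    · have hmax : max 1 l = l := max_eq_right h1
      rw [hmax]
      rcases le_or_gt l n with h | h
      · congr 1; omega
      · have h2 : 2 ≤ l := by omega
        rw [Nat.choose_eq_zero_of_lt (by omega), Nat.choose_eq_zero_of_lt (by omega)]
  unfold s
  rw [hsplit, Finset.card_union_of_disjoint hdisj, hQ, hcount]
end

section
/- For all n ≥ 1, the number of subsets S of {1, 2, ..., n} satisfying min S ≥ |S| (including the empty set) equals F_{n+2}, i.e., s_0(n) = F_{n+2}. -/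
lemma partition_eq (n : ℕ) :
    (Finset.Icc 1 n).powerset.filter (fun S => 0 ≤ S.card ∧ ∀ x ∈ S, S.card ≤ x) =
    (Finset.range (n + 2)).biUnion (fun k => Finset.powersetCard k (Finset.Icc k n)) := by
  ext S
  simp only [Finset.mem_filter, Finset.mem_powerset, Finset.mem_biUnion, Finset.mem_range,
    Finset.mem_powersetCard, Nat.zero_le, true_and]
  constructor
  · rintro ⟨hsub, hmin⟩
    refine ⟨S.card, ?_, ?_, rfl⟩
    · have := Finset.card_le_card hsub
      simp [Nat.card_Icc] at this
      omega
    · intro x hx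
      have h1 := hsub hx
      simp [Finset.mem_Icc] at h1 ⊢
      exact ⟨hmin x hx, h1.2⟩
  · rintro ⟨k, _, hsub, hcard⟩
    constructor
    · intro x hx
      have h1 := hsub hx
      simp [Finset.mem_Icc] at h1 ⊢
      subst hcard
      refine ⟨?_, h1.2⟩
      have : S.Nonempty := ⟨x, hx⟩
      have := Finset.card_pos.mpr this
      omega
    · intro x hx
      have := (Finset.mem_Icc.mp (hsub hx)).1
      omega

theorem schreier_fib (n : ℕ) (hn : 1 ≤ n) : s 0 n = fib (n + 2) := by
  rw [s, partition_eq, Finset.card_biUnion]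
  · have hfib : fib (n + 2) = ∑ p ∈ Finset.HasAntidiagonal.antidiagonal (n + 1), Nat.choose p.1 p.2 :=
      Nat.fib_succ_eq_sum_choose (n + 1)
    rw [hfib, Finset.Nat.sum_antidiagonal_eq_sum_range_succ_mk]
    rw [← Finset.sum_range_reflect]
    apply Finset.sum_congr rfl
    intro k hk
    simp only [Finset.mem_range] at hk
    rw [Finset.card_powersetCard, Nat.card_Icc]
    congr 1 <;> omega
  · intro i _ j _ hij
    simp only [Finset.disjoint_left, Finset.mem_powersetCard]
    rintro S ⟨_, h1⟩ ⟨_, h2⟩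
    exact hij (h1 ▸ h2 ▸ rfl)
end
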